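/- arXiv:2309.12629 — 6 statements merged into one kernel-verified Lean document; each statement's English description precedes it below -/
import Mathlib

section
/- Let N_S > 0, N_B > 0, κ ∈ (0, 1), M > 0. Define I_CD = 4MκN_S(N_S+1)/(1 + N_B + N_S(2N_B + 2 − κ)) and I_CS = 4MκN_S/(2N_B + 1). Then I_CD > I_CS if and only if N_S < N_B/(1 − κ). -/
/-- Quantum advantage criterion for entanglement-assisted phase estimation:
`I_CD > I_CS ↔ N_S < N_B/(1-κ)`. -/
theorem qfi_advantage_iff
    (NS NB κ M : ℝ) (hNS : 0 < NS) (hNB : 0 < NB) (hκ0 : 0 < κ) (hκ1 : κ < 1)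
    (hM : 0 < M) :
    4 * M * κ * NS / (2 * NB + 1) <
      4 * M * κ * NS * (NS + 1) / (1 + NB + NS * (2 * NB + 2 - κ)) ↔
    NS < NB / (1 - κ) := by
  rw [div_lt_div_iff₀ (by linarith) (by nlinarith), lt_div_iff₀ (by linarith)]
  constructor <;> intro h <;>
    nlinarith [mul_pos hM hκ0, mul_pos (mul_pos hM hκ0) hNS]
end

section
/- Fix κ ∈ (0, 1), N_B > 0, M > 0. Define I_CD(N_S) = 4MκN_S(N_S+1)/(1 + N_B + N_S(2N_B + 2 − κ)) and I_CS(N_S) = 4MκN_S/(2N_B + 1). Then lim_{N_S → 0⁺} I_CD(N_S)/I_CS(N_S) = (2N_B + 1)/(N_B + 1); in particular this ratio tends to 2 as N_B → ∞. -/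
open Filter

/-- As `N_S → 0⁺`, the ratio of C→D to coherent-state quantum Fisher information
tends to `(2N_B+1)/(N_B+1)`; this ratio tends to `2` as `N_B → ∞` (the 3 dB advantage). -/
theorem qfi_ratio_low_brightness_limit (κ M : ℝ) (hκ0 : 0 < κ) (hκ1 : κ < 1) (hM : 0 < M) :
    (∀ NB : ℝ, 0 < NB →
      Tendsto (fun NS : ℝ =>
          (4 * M * κ * NS * (NS + 1) / (1 + NB + NS * (2 * NB + 2 - κ))) /
            (4 * M * κ * NS / (2 * NB + 1)))
        (nhdsWithin 0 (Set.Ioi 0)) (nhds ((2 * NB + 1) / (NB + 1)))) ∧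
    Tendsto (fun NB : ℝ => (2 * NB + 1) / (NB + 1)) atTop (nhds 2) := by
  constructor
  · intro NB hNB
    have h2 : (0:ℝ) < 2 * NB + 1 := by linarith
    have hcoef : 2 * NB + 2 - κ > 0 := by linarith
    have key : ∀ NS : ℝ, 0 < NS →
        (4 * M * κ * NS * (NS + 1) / (1 + NB + NS * (2 * NB + 2 - κ))) /
          (4 * M * κ * NS / (2 * NB + 1)) =
        (NS + 1) * (2 * NB + 1) / (1 + NB + NS * (2 * NB + 2 - κ)) := by
      intro NS hNS
      have hD : (1 + NB + NS * (2 * NB + 2 - κ)) ≠ 0 := by positivity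
      have ha : (4 * M * κ * NS) ≠ 0 := by positivity
      field_simp
    have hcont : Tendsto (fun NS : ℝ =>
        (NS + 1) * (2 * NB + 1) / (1 + NB + NS * (2 * NB + 2 - κ)))
        (nhdsWithin 0 (Set.Ioi 0)) (nhds ((2 * NB + 1) / (NB + 1))) := by
      have hval : ((0:ℝ) + 1) * (2 * NB + 1) / (1 + NB + 0 * (2 * NB + 2 - κ)) =
          (2 * NB + 1) / (NB + 1) := by ring_nf
      rw [← hval]
      apply Tendsto.mono_left _ nhdsWithin_le_nhds
      apply ContinuousAt.tendsto
      have hD : (1 + NB + (0:ℝ) * (2 * NB + 2 - κ)) ≠ 0 := by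
        simp; linarith
      exact ContinuousAt.div (by fun_prop) (by fun_prop) hD
    exact hcont.congr' (by
      filter_upwards [self_mem_nhdsWithin] with NS hNS
      exact (key NS hNS).symm)
  · have h1 : Tendsto (fun NB : ℝ => NB + 1) atTop atTop :=
      tendsto_atTop_add_const_right atTop 1 tendsto_id
    have h2 : Tendsto (fun NB : ℝ => (NB + 1)⁻¹) atTop (nhds 0) :=
      h1.inv_tendsto_atTop
    have h3 : Tendsto (fun NB : ℝ => 2 - (NB + 1)⁻¹) atTop (nhds (2 - 0)) :=
      tendsto_const_nhds.sub h2
    have h : Tendsto (fun NB : ℝ => 2 - 1 / (NB + 1)) atTop (nhds 2) := by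
      simpa [one_div] using h3
    refine h.congr' ?_
    filter_upwards [eventually_gt_atTop (0:ℝ)] with NB hNB
    have : (NB:ℝ) + 1 ≠ 0 := by linarith
    field_simp
    ring
end

section
/- Fix κ ∈ (0, 1), N_S > 0, M > 0. Define I_CD(N_B) = 4MκN_S(N_S+1)/(1 + N_B + N_S(2N_B + 2 − κ)) and I_TMSV(N_B) = 4MκN_S(N_S+1)/(1 + N_B(1 + 2N_S) + N_S(1 − κ)). Then lim_{N_B → ∞} I_CD(N_B)/I_TMSV(N_B) = 1. -/
open Filter

/-- In the high-noise limit `N_B → ∞`, the C→D Fisher information attains the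
TMSV quantum Fisher information: `I_CD(N_B)/I_TMSV(N_B) → 1`. -/
theorem cd_receiver_asymptotically_optimal
    (κ NS M : ℝ) (hκ0 : 0 < κ) (hκ1 : κ < 1) (hNS : 0 < NS) (hM : 0 < M) :
    Tendsto (fun NB : ℝ =>
        (4 * M * κ * NS * (NS + 1) / (1 + NB + NS * (2 * NB + 2 - κ))) /
          (4 * M * κ * NS * (NS + 1) / (1 + NB * (1 + 2 * NS) + NS * (1 - κ))))
      atTop (nhds 1) := by
  have ha : 0 < 4 * M * κ * NS * (NS + 1) := by positivity
  have hb : Tendsto (fun NB : ℝ => 1 + NB + NS * (2 * NB + 2 - κ)) atTop atTop := by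
    have : (fun NB : ℝ => 1 + NB + NS * (2 * NB + 2 - κ))
        = fun NB : ℝ => (1 + 2 * NS) * NB + (1 + NS * (2 - κ)) := by
      funext NB; ring
    rw [this]
    exact (tendsto_atTop_add_const_right _ _
      (Tendsto.const_mul_atTop (by linarith) tendsto_id))
  have hlim : Tendsto (fun NB : ℝ => 1 - NS / (1 + NB + NS * (2 * NB + 2 - κ)))
      atTop (nhds 1) := by
    have := (tendsto_const_nhds (x := NS) (f := atTop (α := ℝ))).div_atTop hb
    simpa using (tendsto_const_nhds (x := (1:ℝ))).sub this
  refine hlim.congr' ?_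
  filter_upwards [eventually_ge_atTop (1 : ℝ)] with NB hNB
  have hbpos : 0 < 1 + NB + NS * (2 * NB + 2 - κ) := by nlinarith
  have hcpos : 0 < 1 + NB * (1 + 2 * NS) + NS * (1 - κ) := by nlinarith
  rw [div_div_div_eq]
  rw [one_sub_div hbpos.ne', mul_comm (1 + NB + NS * (2 * NB + 2 - κ)) (4 * M * κ * NS * (NS + 1)), mul_div_mul_left _ _ ha.ne']
  ring
end

section
/- Let g(n) = (n+1)·log₂(n+1) − n·log₂(n). Fix κ ∈ (0,1), N_B > 0, and define N_S′ = κN_S + N_B, D = √((N_S + N_S′ + 1)² − 4κN_S(N_S+1)), A_± = (D − 1 ± (N_S′ − N_S))/2, and C_E(N_S) = g(N_S) + g(N_S′) − g(A₊) − g(A₋). Then lim_{N_S → 0⁺} C_E(N_S)/(N_S·ln(1/N_S)) = κ/((N_B + 1)·ln 2). -/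
open Filter

noncomputable def thermalEntropy (n : ℝ) : ℝ :=
  if n = 0 then 0 else (n + 1) * Real.logb 2 (n + 1) - n * Real.logb 2 n

noncomputable def Gfun (x : ℝ) : ℝ := (x+1) * Real.log (x+1) - x * Real.log x

lemma thermalEntropy_eq' (x : ℝ) :
    (if x = 0 then (0:ℝ) else (x + 1) * Real.logb 2 (x + 1) - x * Real.logb 2 x)
      = Gfun x / Real.log 2 := by
  split
  · rename_i h; simp [h, Gfun]
  · simp only [Real.logb, Gfun]; ring

lemma inv_log_tendsto : Tendsto (fun x : ℝ => 1 / Real.log x) (nhdsWithin 0 (Set.Ioi 0)) (nhds 0) := by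
  have h : Tendsto (fun y : ℝ => y⁻¹) atBot (nhds 0) := by
    have := (tendsto_inv_atTop_zero (𝕜 := ℝ)).comp tendsto_neg_atBot_atTop
    simpa [Function.comp, inv_neg] using this.neg
  simpa [one_div, Function.comp_def] using h.comp Real.tendsto_log_nhdsGT_zero

lemma log_slope_tendsto : Tendsto (fun x : ℝ => Real.log (x+1) / x) (nhdsWithin 0 {(0:ℝ)}ᶜ) (nhds 1) := by
  have h : HasDerivAt (fun t : ℝ => Real.log (t+1)) 1 0 := by
    have := (Real.hasDerivAt_log (by norm_num : (0:ℝ)+1 ≠ 0)).comp 0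
      ((hasDerivAt_id (0:ℝ)).add_const 1)
    simpa [Function.comp_def] using this
  have h2 := hasDerivAt_iff_tendsto_slope.mp h
  refine h2.congr fun t => ?_
  simp [slope_def_field]

lemma Gfun_limit : Tendsto (fun x : ℝ => Gfun x / (x * Real.log (1/x)))
    (nhdsWithin 0 (Set.Ioi 0)) (nhds 1) := by
  have h1 : Tendsto (fun x : ℝ => (x+1) * (Real.log (x+1) / x) * (-(1 / Real.log x)) + 1)
      (nhdsWithin 0 (Set.Ioi 0)) (nhds 1) := by
    have hA : Tendsto (fun x : ℝ => (x+1)) (nhdsWithin 0 (Set.Ioi 0)) (nhds 1) := by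
      have : Tendsto (fun x : ℝ => x + 1) (nhds 0) (nhds (0+1)) :=
        (continuous_id.add continuous_const).tendsto 0
      simpa using this.mono_left (nhdsWithin_le_nhds (s := Set.Ioi (0:ℝ)))
    have hB := log_slope_tendsto.mono_left
      (nhdsWithin_mono 0 (fun x hx => ne_of_gt hx : Set.Ioi (0:ℝ) ⊆ {(0:ℝ)}ᶜ))
    have := ((hA.mul hB).mul inv_log_tendsto.neg).add
      (tendsto_const_nhds (x := (1:ℝ)) (f := nhdsWithin 0 (Set.Ioi 0)))
    simpa using this
  refine h1.congr' ?_
  filter_upwards [Ioo_mem_nhdsGT_of_mem (Set.mem_Ico.mpr ⟨le_refl (0:ℝ), one_pos⟩)] with x hx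
  obtain ⟨hx0, hx1⟩ := hx
  have hlx : Real.log x ≠ 0 := ne_of_lt (Real.log_neg hx0 hx1)
  rw [Real.log_div one_ne_zero (ne_of_gt hx0), Real.log_one, Gfun]
  field_simp
  ring

lemma Gfun_comp_limit (f : ℝ → ℝ) (c : ℝ) (hc : 0 < c)
    (hfpos : ∀ᶠ x in nhdsWithin 0 (Set.Ioi 0), 0 < f x)
    (hratio : Tendsto (fun x => f x / x) (nhdsWithin 0 (Set.Ioi 0)) (nhds c)) :
    Tendsto (fun x => Gfun (f x) / (x * Real.log (1/x)))
      (nhdsWithin 0 (Set.Ioi 0)) (nhds c) := by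
  have hx0 : ∀ᶠ x in nhdsWithin 0 (Set.Ioi (0:ℝ)), 0 < x ∧ x < 1 := by
    filter_upwards [Ioo_mem_nhdsGT_of_mem (Set.mem_Ico.mpr ⟨le_refl (0:ℝ), one_pos⟩)] with x hx
    exact ⟨hx.1, hx.2⟩
  -- f tends to 0 within Ioi 0
  have hf0 : Tendsto f (nhdsWithin 0 (Set.Ioi 0)) (nhds 0) := by
    have : Tendsto (fun x => (f x / x) * x) (nhdsWithin 0 (Set.Ioi 0)) (nhds (c * 0)) :=
      hratio.mul (tendsto_id.mono_right nhdsWithin_le_nhds)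
    rw [mul_zero] at this
    refine this.congr' ?_
    filter_upwards [hx0] with x hx
    exact div_mul_cancel₀ _ (ne_of_gt hx.1)
  have hfW : Tendsto f (nhdsWithin 0 (Set.Ioi 0)) (nhdsWithin 0 (Set.Ioi 0)) :=
    tendsto_nhdsWithin_iff.mpr ⟨hf0, hfpos⟩
  have hf1 : ∀ᶠ x in nhdsWithin 0 (Set.Ioi (0:ℝ)), f x < 1 :=
    hf0.eventually (eventually_lt_nhds one_pos)
  have hA : Tendsto (fun x => Gfun (f x) / (f x * Real.log (1 / f x)))
      (nhdsWithin 0 (Set.Ioi 0)) (nhds 1) := Gfun_limit.comp hfW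
  -- log (f x) / log x → 1
  have hlogc : Tendsto (fun x => Real.log (f x / x)) (nhdsWithin 0 (Set.Ioi 0)) (nhds (Real.log c)) :=
    (Real.continuousAt_log (ne_of_gt hc)).tendsto.comp hratio
  have hlog : Tendsto (fun x => Real.log (f x) / Real.log x)
      (nhdsWithin 0 (Set.Ioi 0)) (nhds 1) := by
    have h2 : Tendsto (fun x => Real.log (f x / x) * (1 / Real.log x) + 1)
        (nhdsWithin 0 (Set.Ioi 0)) (nhds (Real.log c * 0 + 1)) :=
      (hlogc.mul inv_log_tendsto).add tendsto_const_nhds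
    rw [mul_zero, zero_add] at h2
    refine h2.congr' ?_
    filter_upwards [hx0, hfpos] with x hx hfx
    have hlx : Real.log x ≠ 0 := ne_of_lt (Real.log_neg hx.1 hx.2)
    rw [Real.log_div (ne_of_gt hfx) (ne_of_gt hx.1)]
    field_simp
    ring
  have hfinal := (hA.mul hratio).mul hlog
  rw [one_mul] at hfinal
  have : c * 1 = c := mul_one c
  rw [this] at hfinal
  refine hfinal.congr' ?_
  filter_upwards [hx0, hfpos, hf1] with x hx hfx hf1x
  have hlx : Real.log x ≠ 0 := ne_of_lt (Real.log_neg hx.1 hx.2)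
  have hlf : Real.log (f x) ≠ 0 := ne_of_lt (Real.log_neg hfx hf1x)
  rw [Real.log_div one_ne_zero (ne_of_gt hx.1), Real.log_div one_ne_zero (ne_of_gt hfx),
    Real.log_one]
  field_simp [ne_of_gt hfx, hlf, hlx, ne_of_gt hx.1]
  ring

section params
variable {κ NB : ℝ}

lemma delta_nonneg (hκ0 : 0 < κ) (hκ1 : κ < 1) (hNB : 0 < NB) {t : ℝ} (ht : 0 < t) :
    0 ≤ (t + (κ*t+NB) + 1)^2 - 4*κ*t*(t+1) := by
  nlinarith [sq_nonneg ((1-κ)*t), mul_pos ht hNB, mul_pos (mul_pos hκ0 ht) hNB,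
    mul_pos ht (sub_pos.mpr hκ1), sq_nonneg (NB+1)]

lemma Am_identity (hκ0 : 0 < κ) (hκ1 : κ < 1) (hNB : 0 < NB) {t : ℝ} (ht : 0 < t) (ht1 : t < 1) :
    (Real.sqrt ((t + (κ*t+NB) + 1)^2 - 4*κ*t*(t+1)) - 1 - ((κ*t+NB) - t)) / 2
      = 2*t*(NB+1-κ) / (Real.sqrt ((t + (κ*t+NB) + 1)^2 - 4*κ*t*(t+1)) + 1 + (κ*t+NB) - t) := by
  have hΔ : 0 ≤ (t + (κ*t+NB) + 1)^2 - 4*κ*t*(t+1) := delta_nonneg hκ0 hκ1 hNB ht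
  set D := Real.sqrt ((t + (κ*t+NB) + 1)^2 - 4*κ*t*(t+1)) with hDdef
  have hD0 : 0 ≤ D := Real.sqrt_nonneg _
  have hD2 : D^2 = (t + (κ*t+NB) + 1)^2 - 4*κ*t*(t+1) := Real.sq_sqrt hΔ
  have hden : 0 < D + 1 + (κ*t+NB) - t := by nlinarith
  rw [div_eq_div_iff (by norm_num : (2:ℝ) ≠ 0) (ne_of_gt hden)]
  nlinarith [hD2]

lemma Am_pos (hκ0 : 0 < κ) (hκ1 : κ < 1) (hNB : 0 < NB) {t : ℝ} (ht : 0 < t) (ht1 : t < 1) :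
    0 < (Real.sqrt ((t + (κ*t+NB) + 1)^2 - 4*κ*t*(t+1)) - 1 - ((κ*t+NB) - t)) / 2 := by
  rw [Am_identity hκ0 hκ1 hNB ht ht1]
  have hD0 : 0 ≤ Real.sqrt ((t + (κ*t+NB) + 1)^2 - 4*κ*t*(t+1)) := Real.sqrt_nonneg _
  apply div_pos (by nlinarith) (by nlinarith)

lemma D_tendsto (hκ0 : 0 < κ) (hNB : 0 < NB) :
    Tendsto (fun t : ℝ => Real.sqrt ((t + (κ*t+NB) + 1)^2 - 4*κ*t*(t+1)))
      (nhdsWithin 0 (Set.Ioi 0)) (nhds (NB+1)) := by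
  have hcont : Continuous (fun t : ℝ => Real.sqrt ((t + (κ*t+NB) + 1)^2 - 4*κ*t*(t+1))) := by
    apply Real.continuous_sqrt.comp
    continuity
  have := (hcont.tendsto 0).mono_left (nhdsWithin_le_nhds (s := Set.Ioi (0:ℝ)))
  have heq : Real.sqrt ((0 + (κ*0+NB) + 1)^2 - 4*κ*0*(0+1)) = NB + 1 := by
    rw [show ((0:ℝ) + (κ*0+NB) + 1)^2 - 4*κ*0*(0+1) = (NB+1)^2 by ring]
    exact Real.sqrt_sq (by linarith)
  rwa [heq] at this

lemma Am_ratio (hκ0 : 0 < κ) (hκ1 : κ < 1) (hNB : 0 < NB) :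
    Tendsto (fun t : ℝ =>
      ((Real.sqrt ((t + (κ*t+NB) + 1)^2 - 4*κ*t*(t+1)) - 1 - ((κ*t+NB) - t)) / 2) / t)
      (nhdsWithin 0 (Set.Ioi 0)) (nhds ((NB+1-κ)/(NB+1))) := by
  have hden : Tendsto (fun t : ℝ =>
      Real.sqrt ((t + (κ*t+NB) + 1)^2 - 4*κ*t*(t+1)) + 1 + (κ*t+NB) - t)
      (nhdsWithin 0 (Set.Ioi 0)) (nhds (2*(NB+1))) := by
    have hrest : Tendsto (fun t : ℝ => 1 + (κ*t+NB) - t) (nhdsWithin 0 (Set.Ioi 0))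
        (nhds (1 + NB)) := by
      have : Continuous (fun t : ℝ => 1 + (κ*t+NB) - t) := by continuity
      have := (this.tendsto 0).mono_left (nhdsWithin_le_nhds (s := Set.Ioi (0:ℝ)))
      simpa using this
    have := (D_tendsto hκ0 hNB).add hrest
    have heq : ∀ t : ℝ, Real.sqrt ((t + (κ*t+NB) + 1)^2 - 4*κ*t*(t+1)) + (1 + (κ*t+NB) - t)
        = Real.sqrt ((t + (κ*t+NB) + 1)^2 - 4*κ*t*(t+1)) + 1 + (κ*t+NB) - t := fun t => by ring
    rw [show (NB+1) + (1+NB) = 2*(NB+1) by ring] at this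
    exact this.congr heq
  have h2 : Tendsto (fun t : ℝ => 2*(NB+1-κ) /
      (Real.sqrt ((t + (κ*t+NB) + 1)^2 - 4*κ*t*(t+1)) + 1 + (κ*t+NB) - t))
      (nhdsWithin 0 (Set.Ioi 0)) (nhds (2*(NB+1-κ)/(2*(NB+1)))) :=
    tendsto_const_nhds.div hden (by positivity)
  rw [show 2*(NB+1-κ)/(2*(NB+1)) = (NB+1-κ)/(NB+1) by
    rw [mul_div_mul_left _ _ (by norm_num : (2:ℝ) ≠ 0)]] at h2
  refine h2.congr' ?_
  filter_upwards [Ioo_mem_nhdsGT_of_mem (Set.mem_Ico.mpr ⟨le_refl (0:ℝ), one_pos⟩)] with t ht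
  rw [Am_identity hκ0 hκ1 hNB ht.1 ht.2]
  have key : ∀ (a b s : ℝ), s ≠ 0 → 2*s*a/b/s = 2*a/b := by
    intro a b s hs
    rw [mul_comm 2 s, mul_assoc, mul_div_assoc, mul_comm s ((2*a)/b), mul_div_assoc,
      div_self hs, mul_one]
  exact (key (NB+1-κ) _ t (ne_of_gt ht.1)).symm

end params

lemma Gfun_hasDeriv {x : ℝ} (hx : 0 < x) :
    HasDerivAt Gfun (Real.log (x+1) - Real.log x) x := by
  have hx1 : x + 1 ≠ 0 := by linarith
  have hid : HasDerivAt (fun y : ℝ => y + 1) 1 x := (hasDerivAt_id x).add_const 1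
  have hl : HasDerivAt (fun y : ℝ => Real.log (y+1)) ((x+1)⁻¹ * 1) x :=
    by have := (Real.hasDerivAt_log hx1).comp x hid; exact this
  have h1 : HasDerivAt (fun y : ℝ => (y+1) * Real.log (y+1))
      (1 * Real.log (x+1) + (x+1) * ((x+1)⁻¹ * 1)) x := hid.mul hl
  have h2 : HasDerivAt (fun y : ℝ => y * Real.log y)
      (1 * Real.log x + x * x⁻¹) x := (hasDerivAt_id x).mul (Real.hasDerivAt_log (ne_of_gt hx))
  have h3 := h1.sub h2
  have e1 : 1 * Real.log (x+1) + (x+1) * ((x+1)⁻¹ * 1) - (1 * Real.log x + x * x⁻¹)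
      = Real.log (x+1) - Real.log x := by
    field_simp
    ring
  rw [e1] at h3
  exact h3

lemma F_tendsto {κ NB : ℝ} (hκ0 : 0 < κ) (hκ1 : κ < 1) (hNB : 0 < NB) :
    Tendsto (fun t : ℝ => (Gfun (κ*t+NB)
        - Gfun ((Real.sqrt ((t + (κ*t+NB) + 1)^2 - 4*κ*t*(t+1)) - 1 + ((κ*t+NB) - t)) / 2))
        / (t * Real.log (1/t)))
      (nhdsWithin 0 (Set.Ioi 0)) (nhds 0) := by
  set Ap : ℝ → ℝ := fun t =>
    (Real.sqrt ((t + (κ*t+NB) + 1)^2 - 4*κ*t*(t+1)) - 1 + ((κ*t+NB) - t)) / 2 with hApdef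
  have hA0 : Ap 0 = NB := by
    simp only [hApdef]
    rw [show ((0:ℝ) + (κ*0+NB) + 1)^2 - 4*κ*0*(0+1) = (NB+1)^2 by ring,
      Real.sqrt_sq (by linarith)]
    ring
  -- derivative of inner polynomial
  have l1 : HasDerivAt (fun t : ℝ => t + (κ*t+NB) + 1) (1 + κ * 1) 0 :=
    ((hasDerivAt_id (0:ℝ)).add (((hasDerivAt_id (0:ℝ)).const_mul κ).add_const NB)).add_const 1
  have l2 := l1.pow 2
  have l3 : HasDerivAt (fun t : ℝ => 4*κ*t*(t+1))
      ((4*κ*1) * ((0:ℝ)+1) + (4*κ*0) * 1) 0 :=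
    (((hasDerivAt_id (0:ℝ)).const_mul (4*κ)).mul ((hasDerivAt_id (0:ℝ)).add_const 1))
  have lΔ := l2.sub l3
  have hΔ0 : ((0:ℝ) + (κ*0+NB) + 1)^2 - 4*κ*0*(0+1) ≠ 0 := by
    rw [show ((0:ℝ) + (κ*0+NB) + 1)^2 - 4*κ*0*(0+1) = (NB+1)^2 by ring]
    positivity
  have lsq := lΔ.sqrt hΔ0
  have lAp : HasDerivAt Ap _ 0 :=
    ((lsq.sub_const 1).add ((((hasDerivAt_id (0:ℝ)).const_mul κ).add_const NB).sub
      (hasDerivAt_id 0))).div_const 2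
  -- G composed pieces
  have hGNB := Gfun_hasDeriv hNB
  have hinner : HasDerivAt (fun t : ℝ => κ*t+NB) (κ * 1) 0 :=
    ((hasDerivAt_id (0:ℝ)).const_mul κ).add_const NB
  have h1' := hGNB
  rw [show NB = κ*0+NB by ring] at h1'
  have hG1 := h1'.comp 0 hinner
  have h2' := hGNB
  rw [show NB = Ap 0 from hA0.symm] at h2'
  have hG2 := h2'.comp 0 lAp
  have hF := hG1.sub hG2
  have hslope := hasDerivAt_iff_tendsto_slope.mp hF
  have hF0 : Gfun (κ*0+NB) - Gfun (Ap 0) = 0 := by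
    rw [hA0, show κ*0+NB = NB by ring, sub_self]
  have hslope' := hslope.mono_left
    (nhdsWithin_mono 0 (fun x hx => ne_of_gt hx : Set.Ioi (0:ℝ) ⊆ {(0:ℝ)}ᶜ))
  have hslope'' := hslope'.congr (f₂ := fun t : ℝ => (Gfun (κ*t+NB) - Gfun (Ap t)) / t)
    (fun t => by simp [slope_def_field, Function.comp, hA0])
  have hmul := hslope''.mul inv_log_tendsto.neg
  simp only [neg_zero, mul_zero] at hmul
  refine hmul.congr' ?_
  filter_upwards [Ioo_mem_nhdsGT_of_mem (Set.mem_Ico.mpr ⟨le_refl (0:ℝ), one_pos⟩)] with t ht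
  have hlt : Real.log t ≠ 0 := ne_of_lt (Real.log_neg ht.1 ht.2)
  rw [Real.log_div one_ne_zero (ne_of_gt ht.1), Real.log_one]
  field_simp
  simp only [hApdef]
  ring_nf
lemma tE_eq (x : ℝ) : thermalEntropy x = Gfun x / Real.log 2 := by
  rw [thermalEntropy]; exact thermalEntropy_eq' x


/-- The entanglement-assisted capacity `C_E(N_S)` of the thermal-loss channel
satisfies `C_E(N_S)/(N_S ln(1/N_S)) → κ/((N_B+1) ln 2)` as `N_S → 0⁺`. -/
theorem ea_capacity_low_brightness_scaling (κ NB : ℝ) (hκ0 : 0 < κ) (hκ1 : κ < 1)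
    (hNB : 0 < NB) :
    Tendsto (fun NS : ℝ =>
        (thermalEntropy NS + thermalEntropy (κ * NS + NB)
          - thermalEntropy ((Real.sqrt ((NS + (κ * NS + NB) + 1) ^ 2
              - 4 * κ * NS * (NS + 1)) - 1 + ((κ * NS + NB) - NS)) / 2)
          - thermalEntropy ((Real.sqrt ((NS + (κ * NS + NB) + 1) ^ 2
              - 4 * κ * NS * (NS + 1)) - 1 - ((κ * NS + NB) - NS)) / 2))
        / (NS * Real.log (1 / NS)))
      (nhdsWithin 0 (Set.Ioi 0)) (nhds (κ / ((NB + 1) * Real.log 2))) := by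
  have hcpos : 0 < (NB+1-κ)/(NB+1) := div_pos (by linarith) (by linarith)
  have hpos : ∀ᶠ t in nhdsWithin 0 (Set.Ioi (0:ℝ)),
      0 < (Real.sqrt ((t + (κ*t+NB) + 1)^2 - 4*κ*t*(t+1)) - 1 - ((κ*t+NB) - t)) / 2 := by
    filter_upwards [Ioo_mem_nhdsGT_of_mem (Set.mem_Ico.mpr ⟨le_refl (0:ℝ), one_pos⟩)] with t ht
    exact Am_pos hκ0 hκ1 hNB ht.1 ht.2
  have h2 := Gfun_comp_limit
    (fun t => (Real.sqrt ((t + (κ*t+NB) + 1)^2 - 4*κ*t*(t+1)) - 1 - ((κ*t+NB) - t)) / 2)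
    ((NB+1-κ)/(NB+1)) hcpos hpos (Am_ratio hκ0 hκ1 hNB)
  have h3 := F_tendsto hκ0 hκ1 hNB
  have hcomb := ((Gfun_limit.sub h2).add h3).const_mul (1/Real.log 2)
  have hlog2 : Real.log 2 ≠ 0 := ne_of_gt (Real.log_pos one_lt_two)
  have hval : (1/Real.log 2) * ((1 - (NB+1-κ)/(NB+1)) + 0) = κ / ((NB + 1) * Real.log 2) := by
    have h : (NB+1) ≠ 0 := by linarith
    rw [add_zero, show 1 - (NB+1-κ)/(NB+1) = κ/(NB+1) from by field_simp; ring,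
      div_mul_div_comm, one_mul, mul_comm (Real.log 2) (NB+1)]
  rw [hval] at hcomb
  refine hcomb.congr fun t => ?_
  simp only [tE_eq]
  ring
end

section
/- With g, C, and C_E as in the capacity formulas for the thermal-loss channel Φ_{κ,0} (C = g(κN_S + N_B) − g(N_B) and C_E = g(N_S) + g(N_S′) − g(A₊) − g(A₋) with N_S′ = κN_S + N_B, D = √((N_S + N_S′ + 1)² − 4κN_S(N_S+1)), A_± = (D − 1 ± (N_S′ − N_S))/2), for any fixed κ ∈ (0,1) and N_B > 0 the ratio C_E(N_S)/C(N_S) tends to +∞ as N_S → 0⁺. -/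
open Filter

/-- `thermalEntropy` equals the explicit formula everywhere (the `if` is redundant). -/
lemma thermalEntropy_eq (n : ℝ) :
    thermalEntropy n = (n + 1) * Real.logb 2 (n + 1) - n * Real.logb 2 n := by
  unfold thermalEntropy
  split
  · rename_i h
    simp [h]
  · rfl

lemma thermalEntropy_hasDerivAt {x : ℝ} (hx : 0 < x) :
    HasDerivAt thermalEntropy (Real.logb 2 ((x + 1) / x)) x := by
  have h1 : HasDerivAt (fun y : ℝ => (y + 1) * Real.log (y + 1)) (Real.log (x + 1) + 1) x := by
    have h0 : HasDerivAt (fun y : ℝ => y + 1) 1 x := (hasDerivAt_id x).add_const 1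
    have := (Real.hasDerivAt_mul_log (x := x + 1) (by linarith)).comp x h0
    simpa [Function.comp_def] using this
  have h2 : HasDerivAt (fun y : ℝ => y * Real.log y) (Real.log x + 1) x :=
    Real.hasDerivAt_mul_log hx.ne'
  have h3 := (h1.sub h2).div_const (Real.log 2)
  have he : (fun y : ℝ => ((y + 1) * Real.log (y + 1) - y * Real.log y) / Real.log 2)
      = thermalEntropy := by
    funext y
    rw [thermalEntropy_eq, Real.logb, Real.logb]
    ring
  rw [show (Real.log (x + 1) + 1 - (Real.log x + 1)) / Real.log 2
      = Real.logb 2 ((x + 1) / x) by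
    rw [Real.logb, Real.log_div (by linarith) hx.ne']; ring] at h3
  exact he ▸ h3

noncomputable def Rf (κ NB x : ℝ) : ℝ := (x + (κ * x + NB) + 1) ^ 2 - 4 * κ * x * (x + 1)

noncomputable def Df (κ NB x : ℝ) : ℝ := Real.sqrt (Rf κ NB x)

noncomputable def Ap (κ NB x : ℝ) : ℝ := (Df κ NB x - 1 + ((κ * x + NB) - x)) / 2

noncomputable def Am (κ NB x : ℝ) : ℝ := (Df κ NB x - 1 - ((κ * x + NB) - x)) / 2

/-- The entanglement-assisted capacity advantage `C_E(N_S)/C(N_S)` over the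
unassisted capacity grows without bound as the signal brightness `N_S → 0⁺`. -/
theorem ea_advantage_diverges (κ NB : ℝ) (hκ0 : 0 < κ) (hκ1 : κ < 1) (hNB : 0 < NB) :
    Tendsto (fun NS : ℝ =>
        (thermalEntropy NS + thermalEntropy (κ * NS + NB)
          - thermalEntropy ((Real.sqrt ((NS + (κ * NS + NB) + 1) ^ 2
              - 4 * κ * NS * (NS + 1)) - 1 + ((κ * NS + NB) - NS)) / 2)
          - thermalEntropy ((Real.sqrt ((NS + (κ * NS + NB) + 1) ^ 2
              - 4 * κ * NS * (NS + 1)) - 1 - ((κ * NS + NB) - NS)) / 2))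
        / (thermalEntropy (κ * NS + NB) - thermalEntropy NB))
      (nhdsWithin 0 (Set.Ioi 0)) atTop := by
  show Tendsto (fun x : ℝ =>
      (thermalEntropy x + thermalEntropy (κ * x + NB)
        - thermalEntropy (Ap κ NB x) - thermalEntropy (Am κ NB x))
      / (thermalEntropy (κ * x + NB) - thermalEntropy NB)) (nhdsWithin 0 (Set.Ioi 0)) atTop
  -- notation
  set p : ℝ → ℝ := fun y => (y + 1) * Real.logb 2 (y + 1) with hp_def
  set q : ℝ → ℝ := fun y => y * Real.logb 2 y with hq_def
  have hpq : ∀ y, thermalEntropy y = p y - q y := fun y => thermalEntropy_eq y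
  -- basic values
  have hRf0 : Rf κ NB 0 = (NB + 1) ^ 2 := by unfold Rf; ring
  have hDf0 : Df κ NB 0 = NB + 1 := by
    rw [Df, hRf0, Real.sqrt_sq (by linarith)]
  have hAp0 : Ap κ NB 0 = NB := by rw [Ap, hDf0]; ring
  have hAm0 : Am κ NB 0 = 0 := by rw [Am, hDf0]; ring
  -- differentiability of Df at 0
  have hRdiff : DifferentiableAt ℝ (Rf κ NB) 0 := by
    unfold Rf; fun_prop
  have hDdiff : DifferentiableAt ℝ (Df κ NB) 0 := by
    have hne : Rf κ NB 0 ≠ 0 := by rw [hRf0]; positivity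
    have := ((Real.hasDerivAt_sqrt hne).comp 0 hRdiff.hasDerivAt).differentiableAt
    exact this
  have hApdiff : DifferentiableAt ℝ (Ap κ NB) 0 := by
    unfold Ap; fun_prop
  have hAmdiff : DifferentiableAt ℝ (Am κ NB) 0 := by
    unfold Am; fun_prop
  -- differentiability of p
  have hp_diff : ∀ y : ℝ, -1 < y → DifferentiableAt ℝ p y := by
    intro y hy
    have h1 : DifferentiableAt ℝ (fun z : ℝ => (z + 1) * Real.log (z + 1)) y := by
      have h0 : HasDerivAt (fun z : ℝ => z + 1) 1 y := (hasDerivAt_id y).add_const 1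
      exact ((Real.hasDerivAt_mul_log (x := y + 1) (by linarith)).comp y h0).differentiableAt
    have he : p = fun z : ℝ => ((z + 1) * Real.log (z + 1)) / Real.log 2 := by
      funext z; rw [hp_def]; simp only [Real.logb]; ring
    rw [he]
    exact h1.div_const _
  -- the smooth part E
  set E : ℝ → ℝ := fun x => p x + thermalEntropy (κ * x + NB)
      - thermalEntropy (Ap κ NB x) - p (Am κ NB x) with hE_def
  have hhNB : DifferentiableAt ℝ thermalEntropy NB :=
    (thermalEntropy_hasDerivAt hNB).differentiableAt
  have hEdiff : DifferentiableAt ℝ E 0 := by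
    have d1 : DifferentiableAt ℝ p 0 := hp_diff 0 (by norm_num)
    have d2 : DifferentiableAt ℝ (fun x : ℝ => thermalEntropy (κ * x + NB)) 0 := by
      have hin : DifferentiableAt ℝ (fun x : ℝ => κ * x + NB) 0 := by fun_prop
      have : DifferentiableAt ℝ thermalEntropy ((fun x : ℝ => κ * x + NB) 0) := by
        simpa using hhNB
      exact this.comp 0 hin
    have d3 : DifferentiableAt ℝ (fun x : ℝ => thermalEntropy (Ap κ NB x)) 0 := by
      have : DifferentiableAt ℝ thermalEntropy (Ap κ NB 0) := by rw [hAp0]; exact hhNB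
      exact this.comp 0 hApdiff
    have d4 : DifferentiableAt ℝ (fun x : ℝ => p (Am κ NB x)) 0 := by
      have : DifferentiableAt ℝ p (Am κ NB 0) := by
        rw [hAm0]; exact hp_diff 0 (by norm_num)
      exact this.comp 0 hAmdiff
    exact ((d1.add d2).sub d3).sub d4
  have hE0 : E 0 = 0 := by
    have hp0 : p 0 = 0 := by simp [hp_def]
    rw [hE_def]
    simp only [hAp0, hAm0, hp0]
    simp
  have hEslope : Tendsto (fun x => E x / x) (nhdsWithin 0 (Set.Ioi 0)) (nhds (deriv E 0)) := by
    have h := hasDerivAt_iff_tendsto_slope.mp hEdiff.hasDerivAt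
    have h' := h.mono_left (nhdsWithin_mono _ (fun y hy => ne_of_gt hy))
    refine h'.congr' ?_
    filter_upwards [self_mem_nhdsWithin] with y hy
    rw [slope_def_field, hE0, sub_zero, sub_zero]
  -- the function u with A₋ x = x * u x
  set u : ℝ → ℝ := fun x => 2 * (NB + 1 - κ) / (Df κ NB x + (1 + NB + (κ - 1) * x)) with hu_def
  set c : ℝ := (NB + 1 - κ) / (NB + 1) with hc_def
  have hc0 : 0 < c := by
    apply div_pos <;> linarith
  have hc1 : c < 1 := by
    rw [hc_def, div_lt_one (by linarith)]; linarith
  have hu_lim : Tendsto u (nhdsWithin 0 (Set.Ioi 0)) (nhds c) := by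
    have hcontD : ContinuousAt (Df κ NB) 0 := hDdiff.continuousAt
    have hden : ContinuousAt (fun x : ℝ => Df κ NB x + (1 + NB + (κ - 1) * x)) 0 := by
      apply hcontD.add; fun_prop
    have hden0 : (Df κ NB 0 + (1 + NB + (κ - 1) * 0)) = 2 * (NB + 1) := by
      rw [hDf0]; ring
    have : ContinuousAt u 0 := by
      apply ContinuousAt.div continuousAt_const hden
      rw [hden0]; positivity
    have hu0 : u 0 = c := by
      rw [hu_def]; simp only; rw [hden0, hc_def]
      field_simp
    have := this.tendsto
    rw [hu0] at this
    exact this.mono_left nhdsWithin_le_nhds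
  -- eventual facts on (0, δ)
  set δ : ℝ := (1 + NB) / (1 - κ) with hδ_def
  have hδpos : 0 < δ := by apply div_pos <;> linarith
  have hev : ∀ᶠ x in nhdsWithin 0 (Set.Ioi 0), x ∈ Set.Ioo (0:ℝ) δ :=
    Ioo_mem_nhdsGT_of_mem ⟨le_refl 0, hδpos⟩
  have key : ∀ x ∈ Set.Ioo (0:ℝ) δ, Am κ NB x = x * u x ∧ 0 < u x := by
    intro x hx
    obtain ⟨hx0, hxδ⟩ := hx
    have ht : 0 < 1 + NB + (κ - 1) * x := by
      have : (1 - κ) * x < (1 - κ) * δ := by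
        apply mul_lt_mul_of_pos_left hxδ; linarith
      rw [hδ_def] at this
      rw [mul_div_cancel₀ _ (by linarith : (1:ℝ) - κ ≠ 0)] at this
      nlinarith
    have hRx : Rf κ NB x = (1 + NB + (κ - 1) * x) ^ 2 + 4 * x * (NB + 1 - κ) := by
      unfold Rf; ring
    have hRnn : 0 ≤ Rf κ NB x := by
      rw [hRx]
      have h1 : 0 ≤ (1 + NB + (κ - 1) * x) ^ 2 := sq_nonneg _
      nlinarith
    have hDsq : Df κ NB x ^ 2 = Rf κ NB x := Real.sq_sqrt hRnn
    have hDnn : 0 ≤ Df κ NB x := Real.sqrt_nonneg _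
    have hdenpos : 0 < Df κ NB x + (1 + NB + (κ - 1) * x) := by linarith
    constructor
    · rw [Am, hu_def]
      simp only
      rw [div_eq_iff two_ne_zero, mul_div_assoc', div_mul_eq_mul_div, eq_div_iff hdenpos.ne']
      nlinarith [hDsq, hRx]
    · rw [hu_def]
      apply div_pos (by linarith) hdenpos
  -- the singular part tends to atTop
  have hS3 : Tendsto (fun x => u x * Real.logb 2 (u x) + (u x - 1) * Real.logb 2 x)
      (nhdsWithin 0 (Set.Ioi 0)) atTop := by
    have h1 : Tendsto (fun x => u x * Real.logb 2 (u x)) (nhdsWithin 0 (Set.Ioi 0))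
        (nhds (c * Real.logb 2 c)) := by
      apply hu_lim.mul
      have hlog : ContinuousAt (Real.logb 2) c := by
        unfold Real.logb
        exact (Real.continuousAt_log hc0.ne').div_const _
      exact hlog.tendsto.comp hu_lim
    have h2 : Tendsto (fun x => (u x - 1) * Real.logb 2 x) (nhdsWithin 0 (Set.Ioi 0)) atTop := by
      apply Filter.Tendsto.neg_mul_atBot (C := c - 1) (by linarith)
        (hu_lim.sub_const 1)
      exact Real.tendsto_logb_nhdsGT_zero one_lt_two
    exact h1.add_atTop h2
  -- numerator slope tends to atTop
  have hNslope : Tendsto (fun x =>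
      (thermalEntropy x + thermalEntropy (κ * x + NB)
        - thermalEntropy (Ap κ NB x) - thermalEntropy (Am κ NB x)) / x)
      (nhdsWithin 0 (Set.Ioi 0)) atTop := by
    have h := hEslope.add_atTop hS3
    refine h.congr' ?_
    filter_upwards [hev, self_mem_nhdsWithin] with x hx hx0
    obtain ⟨hAm_eq, hu_pos⟩ := key x hx
    have hx0' : (0:ℝ) < x := hx0
    have hq_eq : q (Am κ NB x) = x * u x * (Real.logb 2 x + Real.logb 2 (u x)) := by
      rw [hAm_eq, hq_def]
      simp only
      rw [Real.logb_mul hx0'.ne' hu_pos.ne']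
    have hnum : thermalEntropy x + thermalEntropy (κ * x + NB)
        - thermalEntropy (Ap κ NB x) - thermalEntropy (Am κ NB x)
        = E x + (q (Am κ NB x) - q x) := by
      rw [hE_def]
      simp only
      rw [hpq x, hpq (Am κ NB x)]
      ring
    rw [hnum, add_div, hq_eq, hq_def]
    simp only
    field_simp
    ring
  -- denominator slope
  set L : ℝ := Real.logb 2 ((NB + 1) / NB) * κ with hL_def
  have hL : 0 < L := by
    apply mul_pos _ hκ0
    apply Real.logb_pos one_lt_two
    rw [lt_div_iff₀ hNB]; linarith
  have hdslope : Tendsto (fun x => (thermalEntropy (κ * x + NB) - thermalEntropy NB) / x)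
      (nhdsWithin 0 (Set.Ioi 0)) (nhds L) := by
    have hin : HasDerivAt (fun x : ℝ => κ * x + NB) κ 0 := by
      simpa using ((hasDerivAt_id (0:ℝ)).const_mul κ).add_const NB
    have houter : HasDerivAt thermalEntropy (Real.logb 2 ((NB + 1) / NB))
        ((fun x : ℝ => κ * x + NB) 0) := by
      simpa using thermalEntropy_hasDerivAt hNB
    have hcomp : HasDerivAt (fun x : ℝ => thermalEntropy (κ * x + NB)) L 0 := by
      rw [hL_def]; exact houter.comp 0 hin
    have h := hasDerivAt_iff_tendsto_slope.mp hcomp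
    have h' := h.mono_left (nhdsWithin_mono _ (fun y hy => ne_of_gt hy))
    refine h'.congr' ?_
    filter_upwards [self_mem_nhdsWithin] with y hy
    rw [slope_def_field]
    norm_num
  -- combine
  have hinv : Tendsto (fun x => ((thermalEntropy (κ * x + NB) - thermalEntropy NB) / x)⁻¹)
      (nhdsWithin 0 (Set.Ioi 0)) (nhds L⁻¹) := hdslope.inv₀ hL.ne'
  have hfinal := hNslope.atTop_mul_pos (inv_pos.mpr hL) hinv
  refine hfinal.congr' ?_
  filter_upwards [self_mem_nhdsWithin] with x hx
  have hx0 : (0:ℝ) < x := hx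
  rw [inv_div, div_mul_div_comm, mul_comm _ x, mul_comm _ x,
    mul_div_mul_left _ _ hx0.ne']
end

section
/- Let B > 1 and define Λ_s(B) = ((B+1)^s + (B−1)^s)/((B+1)^s − (B−1)^s) for s ∈ (0,1). The function f(s) = 1/(Λ_s(B) + Λ_{1−s}(B)) is strictly concave on (0,1) and symmetric about s = 1/2; consequently f attains its maximum at s = 1/2, i.e., Λ_s(B) + Λ_{1−s}(B) ≥ 2Λ_{1/2}(B) for all s ∈ (0,1). -/
private lemma strictConcaveOn_congr' {s : Set ℝ} {f g : ℝ → ℝ}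
    (h : ∀ x ∈ s, f x = g x) (hg : StrictConcaveOn ℝ s g) : StrictConcaveOn ℝ s f := by
  refine ⟨hg.1, fun x hx y hy hxy a b ha hb hab => ?_⟩
  rw [h x hx, h y hy, h _ (hg.1 hx hy ha.le hb.le hab)]
  exact hg.2 hx hy hxy ha hb hab

private lemma coth_ratio (a c : ℝ) (hc : 0 < c) (hac : c < a) (t : ℝ) (ht : 0 < t) :
    (a ^ t + c ^ t) / (a ^ t - c ^ t)
      = Real.cosh (t * (Real.log a - Real.log c) / 2)
        / Real.sinh (t * (Real.log a - Real.log c) / 2) := by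
  have ha : 0 < a := hc.trans hac
  set M := t * (Real.log a + Real.log c) / 2 with hM
  set d := t * (Real.log a - Real.log c) / 2 with hd
  have h1 : a ^ t + c ^ t = Real.exp M * (2 * Real.cosh d) := by
    rw [Real.rpow_def_of_pos ha, Real.rpow_def_of_pos hc, Real.cosh_eq]
    rw [show Real.exp M * (2 * ((Real.exp d + Real.exp (-d)) / 2))
        = Real.exp M * Real.exp d + Real.exp M * Real.exp (-d) by ring,
      ← Real.exp_add, ← Real.exp_add]
    rw [show M + d = Real.log a * t by rw [hM, hd]; ring,
      show M + -d = Real.log c * t by rw [hM, hd]; ring]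
  have h2 : a ^ t - c ^ t = Real.exp M * (2 * Real.sinh d) := by
    rw [Real.rpow_def_of_pos ha, Real.rpow_def_of_pos hc, Real.sinh_eq]
    rw [show Real.exp M * (2 * ((Real.exp d - Real.exp (-d)) / 2))
        = Real.exp M * Real.exp d - Real.exp M * Real.exp (-d) by ring,
      ← Real.exp_add, ← Real.exp_add]
    rw [show M + d = Real.log a * t by rw [hM, hd]; ring,
      show M + -d = Real.log c * t by rw [hM, hd]; ring]
  rw [h1, h2, mul_div_mul_left _ _ (Real.exp_ne_zero M),
    mul_div_mul_left _ _ (two_ne_zero)]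

/-- For `B > 1` and `Λ_s(B) = ((B+1)^s + (B−1)^s)/((B+1)^s − (B−1)^s)`, the
function `f(s) = 1/(Λ_s(B) + Λ_{1−s}(B))` is strictly concave on `(0,1)` and
symmetric about `s = 1/2`; hence `Λ_s(B) + Λ_{1−s}(B) ≥ 2Λ_{1/2}(B)`. -/
theorem chernoff_exponent_symmetric_concave (B : ℝ) (hB : 1 < B) :
    (StrictConcaveOn ℝ (Set.Ioo (0 : ℝ) 1)
      (fun s : ℝ =>
        (((B + 1) ^ s + (B - 1) ^ s) / ((B + 1) ^ s - (B - 1) ^ s)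
          + ((B + 1) ^ (1 - s) + (B - 1) ^ (1 - s))
            / ((B + 1) ^ (1 - s) - (B - 1) ^ (1 - s)))⁻¹)) ∧
    (∀ s ∈ Set.Ioo (0 : ℝ) 1,
      (((B + 1) ^ s + (B - 1) ^ s) / ((B + 1) ^ s - (B - 1) ^ s)
          + ((B + 1) ^ (1 - s) + (B - 1) ^ (1 - s))
            / ((B + 1) ^ (1 - s) - (B - 1) ^ (1 - s)))⁻¹
        = (((B + 1) ^ (1 - s) + (B - 1) ^ (1 - s))
            / ((B + 1) ^ (1 - s) - (B - 1) ^ (1 - s))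
          + ((B + 1) ^ s + (B - 1) ^ s) / ((B + 1) ^ s - (B - 1) ^ s))⁻¹) ∧
    (∀ s ∈ Set.Ioo (0 : ℝ) 1,
      2 * (((B + 1) ^ ((1 : ℝ) / 2) + (B - 1) ^ ((1 : ℝ) / 2))
          / ((B + 1) ^ ((1 : ℝ) / 2) - (B - 1) ^ ((1 : ℝ) / 2))) ≤
        ((B + 1) ^ s + (B - 1) ^ s) / ((B + 1) ^ s - (B - 1) ^ s)
          + ((B + 1) ^ (1 - s) + (B - 1) ^ (1 - s))
            / ((B + 1) ^ (1 - s) - (B - 1) ^ (1 - s))) := by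
  have hc : (0 : ℝ) < B - 1 := by linarith
  have hac : B - 1 < B + 1 := by linarith
  set D : ℝ := Real.log (B + 1) - Real.log (B - 1) with hDdef
  have hD : 0 < D := sub_pos.mpr (Real.log_lt_log hc hac)
  -- the coth formula for each term
  have hΛ : ∀ t : ℝ, 0 < t →
      ((B + 1) ^ t + (B - 1) ^ t) / ((B + 1) ^ t - (B - 1) ^ t)
        = Real.cosh (t * D / 2) / Real.sinh (t * D / 2) := by
    intro t ht
    simpa [hDdef] using coth_ratio (B + 1) (B - 1) hc hac t ht
  -- sum formula
  have hsum : ∀ s ∈ Set.Ioo (0 : ℝ) 1,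
      ((B + 1) ^ s + (B - 1) ^ s) / ((B + 1) ^ s - (B - 1) ^ s)
        + ((B + 1) ^ (1 - s) + (B - 1) ^ (1 - s))
          / ((B + 1) ^ (1 - s) - (B - 1) ^ (1 - s))
      = Real.sinh (D / 2) / (Real.sinh (s * D / 2) * Real.sinh ((1 - s) * D / 2)) := by
    intro s hs
    have hs1 : 0 < s := hs.1
    have hs2 : 0 < 1 - s := by linarith [hs.2]
    have hx : 0 < Real.sinh (s * D / 2) := Real.sinh_pos_iff.mpr (by positivity)
    have hy : 0 < Real.sinh ((1 - s) * D / 2) := Real.sinh_pos_iff.mpr (by positivity)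
    rw [hΛ s hs1, hΛ (1 - s) hs2]
    have hxy : s * D / 2 + (1 - s) * D / 2 = D / 2 := by ring
    rw [← hxy, Real.sinh_add]
    field_simp
    ring
  -- product-to-cosh formula
  have hprod : ∀ s : ℝ, Real.sinh (s * D / 2) * Real.sinh ((1 - s) * D / 2)
      = (Real.cosh (D / 2) - Real.cosh ((s - 1 / 2) * D)) / 2 := by
    intro s
    have h1 := Real.cosh_add (s * D / 2) ((1 - s) * D / 2)
    have h2 := Real.cosh_sub (s * D / 2) ((1 - s) * D / 2)
    rw [show s * D / 2 + (1 - s) * D / 2 = D / 2 by ring] at h1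
    rw [show s * D / 2 - (1 - s) * D / 2 = (s - 1 / 2) * D by ring] at h2
    linarith
  -- the nice closed form of the inverse
  set g : ℝ → ℝ := fun s =>
    (Real.cosh (D / 2) - Real.cosh ((s - 1 / 2) * D)) / (2 * Real.sinh (D / 2)) with hgdef
  have hS : 0 < Real.sinh (D / 2) := Real.sinh_pos_iff.mpr (by positivity)
  have hF : ∀ s ∈ Set.Ioo (0 : ℝ) 1,
      (((B + 1) ^ s + (B - 1) ^ s) / ((B + 1) ^ s - (B - 1) ^ s)
        + ((B + 1) ^ (1 - s) + (B - 1) ^ (1 - s))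
          / ((B + 1) ^ (1 - s) - (B - 1) ^ (1 - s)))⁻¹ = g s := by
    intro s hs
    rw [hsum s hs, inv_div, hprod s, hgdef]
    rw [div_div]
  -- strict concavity of g via second derivative
  have hd1 : ∀ x : ℝ, HasDerivAt g
      (-(Real.sinh ((x - 1 / 2) * D) * D) / (2 * Real.sinh (D / 2))) x := by
    intro x
    have h0 : HasDerivAt (fun s : ℝ => (s - 1 / 2) * D) D x := by
      have h := ((hasDerivAt_id x).sub_const (1 / 2)).mul_const D; simp only [one_mul] at h; exact h
    have h1 : HasDerivAt (fun s : ℝ => Real.cosh ((s - 1 / 2) * D))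
        (Real.sinh ((x - 1 / 2) * D) * D) x := h0.cosh
    have h2 := ((h1.const_sub (Real.cosh (D / 2))).div_const (2 * Real.sinh (D / 2)))
    simpa [hgdef] using h2
  set g1 : ℝ → ℝ := fun x => -(Real.sinh ((x - 1 / 2) * D) * D) / (2 * Real.sinh (D / 2))
    with hg1def
  have hderiv1 : deriv g = g1 := by
    funext x; exact (hd1 x).deriv
  have hd2 : ∀ x : ℝ, HasDerivAt g1
      (-(Real.cosh ((x - 1 / 2) * D) * D * D) / (2 * Real.sinh (D / 2))) x := by
    intro x
    have h0 : HasDerivAt (fun s : ℝ => (s - 1 / 2) * D) D x := by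
      have h := ((hasDerivAt_id x).sub_const (1 / 2)).mul_const D; simp only [one_mul] at h; exact h
    have h1 : HasDerivAt (fun s : ℝ => Real.sinh ((s - 1 / 2) * D))
        (Real.cosh ((x - 1 / 2) * D) * D) x := h0.sinh
    have h2 := (((h1.mul_const D).neg).div_const (2 * Real.sinh (D / 2)))
    simpa [hg1def, mul_assoc] using h2
  have hconc_g : StrictConcaveOn ℝ (Set.Ioo (0 : ℝ) 1) g := by
    apply strictConcaveOn_of_deriv2_neg (convex_Ioo 0 1)
    · exact fun x _ => (hd1 x).continuousAt.continuousWithinAt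
    · intro x _
      have : deriv^[2] g x = -(Real.cosh ((x - 1 / 2) * D) * D * D)
          / (2 * Real.sinh (D / 2)) := by
        show deriv (deriv g) x = _
        rw [hderiv1]
        exact (hd2 x).deriv
      rw [this]
      have hch : 0 < Real.cosh ((x - 1 / 2) * D) := Real.cosh_pos _
      apply div_neg_of_neg_of_pos
      · nlinarith [mul_pos (mul_pos hch hD) hD]
      · positivity
  refine ⟨strictConcaveOn_congr' hF hconc_g, fun s hs => by rw [add_comm], ?_⟩
  -- the inequality
  intro s hs
  have hs1 : 0 < s := hs.1
  have hs2 : 0 < 1 - s := by linarith [hs.2]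
  have hx : 0 < Real.sinh (s * D / 2) := Real.sinh_pos_iff.mpr (by positivity)
  have hy : 0 < Real.sinh ((1 - s) * D / 2) := Real.sinh_pos_iff.mpr (by positivity)
  have hs4 : 0 < Real.sinh (D / 4) := Real.sinh_pos_iff.mpr (by positivity)
  have hc4 : 0 < Real.cosh (D / 4) := Real.cosh_pos _
  rw [hsum s hs, hΛ (1 / 2) (by norm_num), show (1 / 2 : ℝ) * D / 2 = D / 4 by ring]
  -- sinh(D/2) = 2 sinh(D/4) cosh(D/4)
  have hS2 : Real.sinh (D / 2) = 2 * Real.sinh (D / 4) * Real.cosh (D / 4) := by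
    rw [show D / 2 = 2 * (D / 4) by ring, Real.sinh_two_mul]
  -- cosh(D/2) = 1 + 2 sinh(D/4)^2
  have hC2 : Real.cosh (D / 2) = 1 + 2 * Real.sinh (D / 4) ^ 2 := by
    rw [show D / 2 = 2 * (D / 4) by ring, Real.cosh_two_mul]
    have := Real.cosh_sq (D / 4)
    nlinarith
  have hP : Real.sinh (s * D / 2) * Real.sinh ((1 - s) * D / 2)
      ≤ Real.sinh (D / 4) ^ 2 := by
    rw [hprod s, hC2]
    have := Real.one_le_cosh ((s - 1 / 2) * D)
    linarith
  rw [show (2 : ℝ) * (Real.cosh (D / 4) / Real.sinh (D / 4))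
      = (2 * Real.cosh (D / 4)) / Real.sinh (D / 4) by ring,
    div_le_div_iff₀ hs4 (mul_pos hx hy)]
  nlinarith [mul_pos hx hy]
end
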